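/- arXiv:0904.1845 — 2 statements merged into one kernel-verified Lean document; each statement's English description precedes it below -/
import Mathlib

section
/- The spin flip rate c_i(σ) = exp(-β Σ_{B∋i} J_B χ_B(σ)) admits the decomposition c_i(σ) = M_i [λ_i(0)·(1/2) + Σ_{k=1}^∞ λ_i(k) p_i^{[k]}(-σ(i)|σ)], where M_i = 2 exp(β Σ_{B∋i} |J_B|), the λ_i(k) are as defined, and p_i^{[k]}(-σ(i)|σ) are the specified update probabilities depending only on σ restricted to B_i(k). -/
open Real

noncomputable section

/-- The `L¹` ball of radius `k` around `i` in `ℤ^d`, as a finite set. -/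
def ball {d : ℕ} (i : Fin d → ℤ) (k : ℕ) : Finset (Fin d → ℤ) :=
  (Finset.Icc (fun t => i t - (k : ℤ)) (fun t => i t + (k : ℤ))).filter
    (fun j => (∑ t, |j t - i t|) ≤ (k : ℤ))

/-- `Σ_{B ∋ i} |J_B|`. -/
def totalJ {d : ℕ} (J : Finset (Fin d → ℤ) → ℝ) (i : Fin d → ℤ) : ℝ :=
  ∑' B : Finset (Fin d → ℤ), if i ∈ B then |J B| else 0

/-- `S_i^{>k} = Σ_{B ∋ i, B ⊄ B_i(k)} |J_B|`. -/
def tailJ {d : ℕ} (J : Finset (Fin d → ℤ) → ℝ) (i : Fin d → ℤ) (k : ℕ) : ℝ :=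
  ∑' B : Finset (Fin d → ℤ), if i ∈ B ∧ ¬ B ⊆ ball i k then |J B| else 0

/-- The telescoped tail-exponential sequence `λ_i(k)`. -/
def lam {d : ℕ} (J : Finset (Fin d → ℤ) → ℝ) (β : ℝ) (i : Fin d → ℤ) : ℕ → ℝ
  | 0 => exp (-2 * β * totalJ J i)
  | 1 => exp (-β * tailJ J i 1) - exp (-2 * β * totalJ J i)
  | (k+2) => exp (-β * tailJ J i (k+2)) - exp (-β * tailJ J i (k+1))

/-- `χ_B(σ) = Π_{j ∈ B} σ(j)`. -/
def chi {d : ℕ} (B : Finset (Fin d → ℤ)) (σ : (Fin d → ℤ) → ℝ) : ℝ :=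
  ∏ j ∈ B, σ j

/-- `Σ_{B ∋ i} J_B χ_B(σ)`. -/
def energy {d : ℕ} (J : Finset (Fin d → ℤ) → ℝ) (i : Fin d → ℤ)
    (σ : (Fin d → ℤ) → ℝ) : ℝ :=
  ∑' B : Finset (Fin d → ℤ), if i ∈ B then J B * chi B σ else 0

/-- `Σ_{B ∋ i, B ⊆ B_i(k)} J_B χ_B(σ)`. -/
def energyIn {d : ℕ} (J : Finset (Fin d → ℤ) → ℝ) (i : Fin d → ℤ) (k : ℕ)
    (σ : (Fin d → ℤ) → ℝ) : ℝ :=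
  ∑' B : Finset (Fin d → ℤ), if i ∈ B ∧ B ⊆ ball i k then J B * chi B σ else 0

/-- `Σ_{B ∋ i, B ⊆ B_i(k)} |J_B|`. -/
def innerAbs {d : ℕ} (J : Finset (Fin d → ℤ) → ℝ) (i : Fin d → ℤ) (k : ℕ) : ℝ :=
  ∑' B : Finset (Fin d → ℤ), if i ∈ B ∧ B ⊆ ball i k then |J B| else 0

/-- `Σ_{B ∋ i, B ⊆ B_i(k), B ⊄ B_i(k-1)} J_B χ_B(σ)`. -/
def shellE {d : ℕ} (J : Finset (Fin d → ℤ) → ℝ) (i : Fin d → ℤ) (k : ℕ)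
    (σ : (Fin d → ℤ) → ℝ) : ℝ :=
  ∑' B : Finset (Fin d → ℤ),
    if i ∈ B ∧ B ⊆ ball i k ∧ ¬ B ⊆ ball i (k - 1) then J B * chi B σ else 0

/-- `Σ_{B ∋ i, B ⊆ B_i(k), B ⊄ B_i(k-1)} |J_B|`. -/
def shellAbs {d : ℕ} (J : Finset (Fin d → ℤ) → ℝ) (i : Fin d → ℤ) (k : ℕ) : ℝ :=
  ∑' B : Finset (Fin d → ℤ),
    if i ∈ B ∧ B ⊆ ball i k ∧ ¬ B ⊆ ball i (k - 1) then |J B| else 0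

/-- `M_i = 2 exp(β Σ_{B ∋ i} |J_B|)`. -/
def bigM {d : ℕ} (J : Finset (Fin d → ℤ) → ℝ) (β : ℝ) (i : Fin d → ℤ) : ℝ :=
  2 * exp (β * totalJ J i)

/-- The spin flip rate `c_i(σ) = exp(-β Σ_{B ∋ i} J_B χ_B(σ))`. -/
def rate {d : ℕ} (J : Finset (Fin d → ℤ) → ℝ) (β : ℝ) (i : Fin d → ℤ)
    (σ : (Fin d → ℤ) → ℝ) : ℝ :=
  exp (-β * energy J i σ)

/-- The truncated flip rate
`c_i^{[ℓ]}(σ) = exp(-β Σ_{B ∋ i, B ⊄ B_i(ℓ)} |J_B|) exp(-β Σ_{B ∋ i, B ⊆ B_i(ℓ)} J_B χ_B(σ))`. -/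
def rateT {d : ℕ} (J : Finset (Fin d → ℤ) → ℝ) (β : ℝ) (i : Fin d → ℤ) (ℓ : ℕ)
    (σ : (Fin d → ℤ) → ℝ) : ℝ :=
  exp (-β * tailJ J i ℓ) * exp (-β * energyIn J i ℓ σ)

/-- The update probabilities `p_i^{[k]}(-σ(i) | σ)`. -/
def updateP {d : ℕ} (J : Finset (Fin d → ℤ) → ℝ) (β : ℝ) (i : Fin d → ℤ)
    (σ : (Fin d → ℤ) → ℝ) : ℕ → ℝ
  | 0 => 1 / 2
  | 1 => (1 / bigM J β i) *
      ((exp (-β * energyIn J i 1 σ) - exp (-β * innerAbs J i 1)) /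
        (1 - exp (-2 * β * innerAbs J i 1) * exp (-β * tailJ J i 1)))
  | (k+2) => (1 / bigM J β i) * exp (-β * energyIn J i (k + 1) σ) *
      ((exp (-β * shellE J i (k + 2) σ) - exp (-β * shellAbs J i (k + 2))) /
        (1 - exp (-β * shellAbs J i (k + 2))))

section Helpers

open Filter Topology

variable {d : ℕ} {J : Finset (Fin d → ℤ) → ℝ} {β : ℝ} {i : Fin d → ℤ}
  {σ : (Fin d → ℤ) → ℝ}

lemma mem_ball_iff {j : Fin d → ℤ} {k : ℕ} :
    j ∈ ball i k ↔ (∑ t, |j t - i t|) ≤ (k : ℤ) := by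
  constructor
  · intro h; exact (Finset.mem_filter.1 h).2
  · intro h
    have key : ∀ t, |j t - i t| ≤ (k : ℤ) := fun t =>
      le_trans (Finset.single_le_sum (f := fun t => |j t - i t|)
        (fun t _ => abs_nonneg _) (Finset.mem_univ t)) h
    refine Finset.mem_filter.2 ⟨Finset.mem_Icc.2 ⟨fun t => ?_, fun t => ?_⟩, h⟩
    · show i t - (k : ℤ) ≤ j t
      obtain ⟨hl, hr⟩ := abs_le.1 (key t)
      omega
    · show j t ≤ i t + (k : ℤ)
      obtain ⟨hl, hr⟩ := abs_le.1 (key t)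
      omega

lemma ball_mono {k l : ℕ} (h : k ≤ l) : ball i k ⊆ ball i l := by
  intro j hj
  rw [mem_ball_iff] at hj ⊢
  exact le_trans hj (by exact_mod_cast h)

lemma card_le_one_of_subset_ball_zero {B : Finset (Fin d → ℤ)}
    (h : B ⊆ ball i 0) : B.card ≤ 1 := by
  have hsub : B ⊆ {i} := by
    intro j hj
    have := mem_ball_iff.1 (h hj)
    simp only [Nat.cast_zero] at this
    have hz : ∑ t, |j t - i t| = 0 :=
      le_antisymm this (Finset.sum_nonneg fun t _ => abs_nonneg _)
    have := (Finset.sum_eq_zero_iff_of_nonneg fun t _ => abs_nonneg _).1 hz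
    have hji : j = i := funext fun t => by
      have h2 := abs_eq_zero.1 (this t (Finset.mem_univ t)); omega
    simp [hji]
  simpa using Finset.card_le_card hsub

lemma abs_chi (hσ : ∀ j, σ j = 1 ∨ σ j = -1) (B : Finset (Fin d → ℤ)) :
    |chi B σ| = 1 := by
  unfold chi
  rw [Finset.abs_prod]
  exact Finset.prod_eq_one fun j _ => by rcases hσ j with h | h <;> simp [h]

lemma summable_ind (hs : Summable fun B => if i ∈ B then |J B| else 0)
    (P : Finset (Fin d → ℤ) → Prop) [DecidablePred P] :
    Summable (fun B => if i ∈ B ∧ P B then |J B| else 0) := by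
  refine hs.of_nonneg_of_le (fun B => ?_) (fun B => ?_)
  · split_ifs <;> simp [abs_nonneg]
  · by_cases h : i ∈ B ∧ P B
    · simp [h, h.1]
    · simp only [h, if_false]
      split_ifs <;> simp [abs_nonneg]

lemma summable_indE (hs : Summable fun B => if i ∈ B then |J B| else 0)
    (hσ : ∀ j, σ j = 1 ∨ σ j = -1)
    (P : Finset (Fin d → ℤ) → Prop) [DecidablePred P] :
    Summable (fun B => if i ∈ B ∧ P B then J B * chi B σ else 0) := by
  refine Summable.of_norm_bounded hs (fun B => ?_)
  by_cases h : i ∈ B ∧ P B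
  · simp [h, h.1, Real.norm_eq_abs, abs_mul, abs_chi hσ]
  · simp only [h, if_false, norm_zero]
    split_ifs <;> simp [abs_nonneg]

lemma totalJ_split (hs : Summable fun B => if i ∈ B then |J B| else 0) (k : ℕ) :
    totalJ J i = innerAbs J i k + tailJ J i k := by
  unfold totalJ innerAbs tailJ
  rw [← Summable.tsum_add (summable_ind hs (fun B => B ⊆ ball i k))
    (summable_ind hs (fun B => ¬ B ⊆ ball i k))]
  refine tsum_congr fun B => ?_
  by_cases h1 : i ∈ B
  · by_cases h2 : B ⊆ ball i k <;> simp [h1, h2]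
  · simp [h1]

lemma tailJ_split (hs : Summable fun B => if i ∈ B then |J B| else 0) (k : ℕ) :
    tailJ J i k = shellAbs J i (k + 1) + tailJ J i (k + 1) := by
  unfold tailJ shellAbs
  rw [← Summable.tsum_add
    (summable_ind hs (fun B => B ⊆ ball i (k+1) ∧ ¬ B ⊆ ball i (k+1-1)))
    (summable_ind hs (fun B => ¬ B ⊆ ball i (k+1)))]
  refine tsum_congr fun B => ?_
  simp only [Nat.add_sub_cancel]
  by_cases h1 : i ∈ B
  · by_cases h2 : B ⊆ ball i k
    · have h3 : B ⊆ ball i (k+1) := h2.trans (ball_mono (Nat.le_succ k))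
      simp [h1, h2, h3]
    · by_cases h3 : B ⊆ ball i (k+1) <;> simp [h1, h2, h3]
  · simp [h1]

lemma energyIn_split (hs : Summable fun B => if i ∈ B then |J B| else 0)
    (hσ : ∀ j, σ j = 1 ∨ σ j = -1) (k : ℕ) :
    energyIn J i (k + 1) σ = energyIn J i k σ + shellE J i (k + 1) σ := by
  unfold energyIn shellE
  rw [← Summable.tsum_add (summable_indE hs hσ (fun B => B ⊆ ball i k))
    (summable_indE hs hσ (fun B => B ⊆ ball i (k+1) ∧ ¬ B ⊆ ball i (k+1-1)))]
  refine tsum_congr fun B => ?_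
  simp only [Nat.add_sub_cancel]
  by_cases h1 : i ∈ B
  · by_cases h2 : B ⊆ ball i k
    · have h3 : B ⊆ ball i (k+1) := h2.trans (ball_mono (Nat.le_succ k))
      simp [h1, h2, h3]
    · by_cases h3 : B ⊆ ball i (k+1) <;> simp [h1, h2, h3]
  · simp [h1]

lemma tailJ_zero_eq (hJ : ∀ B : Finset (Fin d → ℤ), B.card ≤ 1 → J B = 0) :
    tailJ J i 0 = totalJ J i := by
  unfold tailJ totalJ
  refine tsum_congr fun B => ?_
  by_cases h1 : i ∈ B
  · by_cases h2 : B ⊆ ball i 0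
    · simp [h1, h2, hJ B (card_le_one_of_subset_ball_zero h2)]
    · simp [h1, h2]
  · simp [h1]

lemma energyIn_zero_eq (hJ : ∀ B : Finset (Fin d → ℤ), B.card ≤ 1 → J B = 0) :
    energyIn J i 0 σ = 0 := by
  unfold energyIn
  have h0 : ∀ B : Finset (Fin d → ℤ),
      (if i ∈ B ∧ B ⊆ ball i 0 then J B * chi B σ else 0) = 0 := by
    intro B
    by_cases h : i ∈ B ∧ B ⊆ ball i 0
    · simp [h, hJ B (card_le_one_of_subset_ball_zero h.2)]
    · simp [h]
  rw [tsum_congr h0]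
  exact tsum_zero

lemma innerAbs_nonneg (k : ℕ) : 0 ≤ innerAbs J i k :=
  tsum_nonneg fun B => by split_ifs <;> simp [abs_nonneg]

lemma tailJ_nonneg (k : ℕ) : 0 ≤ tailJ J i k :=
  tsum_nonneg fun B => by split_ifs <;> simp [abs_nonneg]

lemma shellAbs_nonneg (k : ℕ) : 0 ≤ shellAbs J i k :=
  tsum_nonneg fun B => by split_ifs <;> simp [abs_nonneg]

lemma abs_energyIn_le (hs : Summable fun B => if i ∈ B then |J B| else 0)
    (hσ : ∀ j, σ j = 1 ∨ σ j = -1) (k : ℕ) :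
    |energyIn J i k σ| ≤ innerAbs J i k := by
  unfold energyIn innerAbs
  have h := norm_tsum_le_tsum_norm (f := fun B =>
      if i ∈ B ∧ B ⊆ ball i k then J B * chi B σ else 0) ?_
  · rw [Real.norm_eq_abs] at h
    refine h.trans (le_of_eq (tsum_congr fun B => ?_))
    by_cases hb : i ∈ B ∧ B ⊆ ball i k
    · simp [hb, Real.norm_eq_abs, abs_mul, abs_chi hσ]
    · simp [hb]
  · refine (summable_ind hs (fun B => B ⊆ ball i k)).congr fun B => ?_
    by_cases hb : i ∈ B ∧ B ⊆ ball i k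
    · simp [hb, Real.norm_eq_abs, abs_mul, abs_chi hσ]
    · simp [hb]

lemma abs_shellE_le (hs : Summable fun B => if i ∈ B then |J B| else 0)
    (hσ : ∀ j, σ j = 1 ∨ σ j = -1) (k : ℕ) :
    |shellE J i k σ| ≤ shellAbs J i k := by
  unfold shellE shellAbs
  have h := norm_tsum_le_tsum_norm (f := fun B =>
      if i ∈ B ∧ B ⊆ ball i k ∧ ¬ B ⊆ ball i (k-1) then J B * chi B σ else 0) ?_
  · rw [Real.norm_eq_abs] at h
    refine h.trans (le_of_eq (tsum_congr fun B => ?_))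
    by_cases hb : i ∈ B ∧ B ⊆ ball i k ∧ ¬ B ⊆ ball i (k-1)
    · simp [hb, Real.norm_eq_abs, abs_mul, abs_chi hσ]
    · simp [hb]
  · refine (summable_ind hs (fun B => B ⊆ ball i k ∧ ¬ B ⊆ ball i (k-1))).congr
      fun B => ?_
    by_cases hb : i ∈ B ∧ B ⊆ ball i k ∧ ¬ B ⊆ ball i (k-1)
    · simp [hb, Real.norm_eq_abs, abs_mul, abs_chi hσ]
    · simp [hb]

set_option maxHeartbeats 1000000 in
lemma eventually_subset_ball (B : Finset (Fin d → ℤ)) :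
    ∀ᶠ ℓ : ℕ in atTop, B ⊆ ball i ℓ := by
  refine eventually_atTop.2 ⟨B.sup fun j => (∑ t, |j t - i t|).toNat, fun ℓ hℓ j hj => ?_⟩
  rw [mem_ball_iff]
  have h2 : (∑ t, |j t - i t|).toNat ≤ ℓ :=
    le_trans (Finset.le_sup (f := fun j => (∑ t, |j t - i t|).toNat) hj) hℓ
  have h3 : ∑ t, |j t - i t| ≤ ((∑ t, |j t - i t|).toNat : ℤ) := Int.self_le_toNat _
  exact le_trans h3 (by exact_mod_cast h2)

lemma tendsto_tailJ (hs : Summable fun B => if i ∈ B then |J B| else 0) :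
    Tendsto (fun ℓ => tailJ J i ℓ) atTop (𝓝 0) := by
  have h := tendsto_tsum_of_dominated_convergence (𝓕 := atTop)
    (f := fun (ℓ : ℕ) (B : Finset (Fin d → ℤ)) =>
      if i ∈ B ∧ ¬ B ⊆ ball i ℓ then |J B| else 0)
    (g := fun _ => (0 : ℝ))
    (bound := fun B => if i ∈ B then |J B| else 0) hs
    (fun B => ?_) ?_
  · simpa [tailJ] using h
  · refine Tendsto.congr' ?_ tendsto_const_nhds
    filter_upwards [eventually_subset_ball (i := i) B] with ℓ hℓ
    simp [hℓ]
  · filter_upwards with ℓ B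
    by_cases h1 : i ∈ B ∧ ¬ B ⊆ ball i ℓ
    · simp [h1, h1.1, Real.norm_eq_abs, abs_abs]
    · simp only [h1, if_false, norm_zero]
      split_ifs <;> simp [abs_nonneg]

lemma tendsto_energyIn (hs : Summable fun B => if i ∈ B then |J B| else 0)
    (hσ : ∀ j, σ j = 1 ∨ σ j = -1) :
    Tendsto (fun ℓ => energyIn J i ℓ σ) atTop (𝓝 (energy J i σ)) := by
  have h := tendsto_tsum_of_dominated_convergence (𝓕 := atTop)
    (f := fun (ℓ : ℕ) (B : Finset (Fin d → ℤ)) =>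
      if i ∈ B ∧ B ⊆ ball i ℓ then J B * chi B σ else 0)
    (g := fun B => if i ∈ B then J B * chi B σ else 0)
    (bound := fun B => if i ∈ B then |J B| else 0) hs
    (fun B => ?_) ?_
  · simpa [energyIn, energy] using h
  · refine Tendsto.congr' ?_ tendsto_const_nhds
    filter_upwards [eventually_subset_ball (i := i) B] with ℓ hℓ
    by_cases h1 : i ∈ B <;> simp [h1, hℓ]
  · filter_upwards with ℓ B
    by_cases h1 : i ∈ B ∧ B ⊆ ball i ℓ
    · simp [h1, h1.1, Real.norm_eq_abs, abs_mul, abs_chi hσ]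
    · simp only [h1, if_false, norm_zero]
      split_ifs <;> simp [abs_nonneg]

lemma tendsto_rateT (hs : Summable fun B => if i ∈ B then |J B| else 0)
    (hσ : ∀ j, σ j = 1 ∨ σ j = -1) :
    Tendsto (fun ℓ => rateT J β i ℓ σ) atTop (𝓝 (rate J β i σ)) := by
  have h1 := ((tendsto_tailJ hs).const_mul (-β)).rexp
  have h2 := ((tendsto_energyIn hs hσ).const_mul (-β)).rexp
  have h := h1.mul h2
  simpa [rateT, rate, mul_comm] using h

end Helpers

section Main

open Filter Topology

variable {d : ℕ} {J : Finset (Fin d → ℤ) → ℝ} {β : ℝ} {i : Fin d → ℤ}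
  {σ : (Fin d → ℤ) → ℝ}

lemma term_eq (hβ : 0 < β)
    (hJ : ∀ B : Finset (Fin d → ℤ), B.card ≤ 1 → J B = 0)
    (hs : Summable fun B => if i ∈ B then |J B| else 0)
    (hσ : ∀ j, σ j = 1 ∨ σ j = -1) (k : ℕ) :
    lam J β i (k + 1) * updateP J β i σ (k + 1) =
      (1 / bigM J β i) * (rateT J β i (k + 1) σ - rateT J β i k σ) := by
  cases k with
  | zero =>
    have hT0 : tailJ J i 0 = totalJ J i := tailJ_zero_eq hJ
    have hE0 : energyIn J i 0 σ = (0 : ℝ) := energyIn_zero_eq hJ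
    have hsplit : totalJ J i = innerAbs J i 1 + tailJ J i 1 := totalJ_split hs 1
    set T := totalJ J i with hT
    set A := innerAbs J i 1 with hA
    set t1 := tailJ J i 1 with ht1
    set E1 := energyIn J i 1 σ with hE1
    have hAn : 0 ≤ A := innerAbs_nonneg 1
    have htn : 0 ≤ t1 := tailJ_nonneg 1
    have hEA : |E1| ≤ A := abs_energyIn_le hs hσ 1
    by_cases hTz : T = 0
    · have hA0 : A = 0 := by linarith [hsplit]
      have ht0 : t1 = 0 := by linarith [hsplit]
      have hE10 : E1 = 0 := by
        have : |E1| ≤ 0 := by linarith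
        exact abs_eq_zero.1 (le_antisymm this (abs_nonneg _))
      simp only [lam, updateP, rateT, ← hT, ← hA, ← ht1, ← hE1, hT0, hE0,
        hTz, hA0, ht0, hE10]
      norm_num
    · have hTpos : 0 < T := lt_of_le_of_ne (by linarith [hsplit]) (Ne.symm hTz)
      have hX : Real.exp (-2 * β * A) * Real.exp (-β * t1) =
          Real.exp (-β * (A + T)) := by
        rw [← Real.exp_add]; congr 1; rw [hsplit]; ring
      have hlt : Real.exp (-β * (A + T)) < 1 := by
        rw [Real.exp_lt_one_iff]; nlinarith
      have hden : 1 - Real.exp (-β * (A + T)) ≠ 0 := by linarith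
      have hlam : lam J β i 1 =
          Real.exp (-β * t1) * (1 - Real.exp (-β * (A + T))) := by
        simp only [lam, ← hT, ← ht1]
        rw [mul_sub, mul_one, ← Real.exp_add]
        congr 2
        rw [hsplit]; ring
      have h1 : Real.exp (-β * t1) * Real.exp (-β * A) = Real.exp (-β * T) := by
        rw [← Real.exp_add]; congr 1; rw [hsplit]; ring
      have hcan : (Real.exp (-β * E1) - Real.exp (-β * A)) /
          (1 - Real.exp (-β * (A + T))) * (1 - Real.exp (-β * (A + T))) =
          Real.exp (-β * E1) - Real.exp (-β * A) := div_mul_cancel₀ _ hden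
      calc lam J β i 1 * updateP J β i σ 1
          = (1 / bigM J β i) * (Real.exp (-β * t1) *
              ((Real.exp (-β * E1) - Real.exp (-β * A)) /
                (1 - Real.exp (-β * (A + T))) * (1 - Real.exp (-β * (A + T))))) := by
            rw [hlam]
            simp only [updateP, ← hA, ← ht1, ← hE1, hX]
            ring
        _ = (1 / bigM J β i) * (Real.exp (-β * t1) *
              (Real.exp (-β * E1) - Real.exp (-β * A))) := by rw [hcan]
        _ = (1 / bigM J β i) * (rateT J β i (0 + 1) σ - rateT J β i 0 σ) := by
            rw [rateT, rateT, ← ht1, ← hE1, hT0, hE0, mul_zero, Real.exp_zero,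
              mul_one, ← h1]
            ring
  | succ n =>
    have hts : tailJ J i (n + 1) = shellAbs J i (n + 2) + tailJ J i (n + 2) :=
      tailJ_split hs (n + 1)
    have hes : energyIn J i (n + 2) σ = energyIn J i (n + 1) σ + shellE J i (n + 2) σ :=
      energyIn_split hs hσ (n + 1)
    set t1 := tailJ J i (n + 1) with ht1
    set t2 := tailJ J i (n + 2) with ht2
    set sA := shellAbs J i (n + 2) with hsA
    set sE := shellE J i (n + 2) σ with hsE
    set E1 := energyIn J i (n + 1) σ with hE1
    set E2 := energyIn J i (n + 2) σ with hE2
    have hsAn : 0 ≤ sA := shellAbs_nonneg (n + 2)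
    have hsEa : |sE| ≤ sA := abs_shellE_le hs hσ (n + 2)
    by_cases hz : sA = 0
    · have hsE0 : sE = 0 := by
        have : |sE| ≤ 0 := by linarith
        exact abs_eq_zero.1 (le_antisymm this (abs_nonneg _))
      have ht12 : t1 = t2 := by rw [hts, hz, zero_add]
      have hE12 : E2 = E1 := by rw [hes, hsE0, add_zero]
      simp only [lam, updateP, rateT, ← ht1, ← ht2, ← hsA, ← hsE, ← hE1, ← hE2,
        ht12, hE12, hz, hsE0]
      norm_num
    · have hpos : 0 < sA := lt_of_le_of_ne hsAn (Ne.symm hz)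
      have hlt : Real.exp (-β * sA) < 1 := by
        rw [Real.exp_lt_one_iff]; nlinarith
      have hden : 1 - Real.exp (-β * sA) ≠ 0 := by linarith
      have hlam : lam J β i (n + 2) =
          Real.exp (-β * t2) * (1 - Real.exp (-β * sA)) := by
        simp only [lam, ← ht1, ← ht2]
        rw [mul_sub, mul_one, ← Real.exp_add]
        congr 2
        rw [hts]; ring
      have hA1 : Real.exp (-β * t2) * Real.exp (-β * E1) * Real.exp (-β * sE) =
          Real.exp (-β * t2) * Real.exp (-β * E2) := by
        simp only [← Real.exp_add]
        congr 1
        rw [hes]; ring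
      have hA2 : Real.exp (-β * t2) * Real.exp (-β * E1) * Real.exp (-β * sA) =
          Real.exp (-β * t1) * Real.exp (-β * E1) := by
        simp only [← Real.exp_add]
        congr 1
        rw [hts]; ring
      have hcan : (Real.exp (-β * sE) - Real.exp (-β * sA)) /
          (1 - Real.exp (-β * sA)) * (1 - Real.exp (-β * sA)) =
          Real.exp (-β * sE) - Real.exp (-β * sA) := div_mul_cancel₀ _ hden
      calc lam J β i (n + 1 + 1) * updateP J β i σ (n + 1 + 1)
          = (1 / bigM J β i) * (Real.exp (-β * t2) * Real.exp (-β * E1) *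
              ((Real.exp (-β * sE) - Real.exp (-β * sA)) /
                (1 - Real.exp (-β * sA)) * (1 - Real.exp (-β * sA)))) := by
            rw [hlam]
            simp only [updateP, ← hsA, ← hsE, ← hE1]
            ring
        _ = (1 / bigM J β i) * (Real.exp (-β * t2) * Real.exp (-β * E1) *
              (Real.exp (-β * sE) - Real.exp (-β * sA))) := by rw [hcan]
        _ = (1 / bigM J β i) * (rateT J β i (n + 1 + 1) σ - rateT J β i (n + 1) σ) := by
            rw [rateT, rateT, ← ht1, ← ht2, ← hE1, ← hE2, ← hA1, ← hA2]
            ring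

lemma rateT_mono (hβ : 0 < β)
    (hs : Summable fun B => if i ∈ B then |J B| else 0)
    (hσ : ∀ j, σ j = 1 ∨ σ j = -1) (k : ℕ) :
    rateT J β i k σ ≤ rateT J β i (k + 1) σ := by
  have hts : tailJ J i k = shellAbs J i (k + 1) + tailJ J i (k + 1) :=
    tailJ_split hs k
  have hes : energyIn J i (k + 1) σ = energyIn J i k σ + shellE J i (k + 1) σ :=
    energyIn_split hs hσ k
  have hsEa : |shellE J i (k + 1) σ| ≤ shellAbs J i (k + 1) :=
    abs_shellE_le hs hσ (k + 1)
  have h := abs_le.1 hsEa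
  unfold rateT
  rw [← Real.exp_add, ← Real.exp_add]
  apply Real.exp_le_exp.2
  rw [hts, hes]
  nlinarith [h.2]

end Main

open Filter Topology

/-- the infinite range spin flip rate admits the decomposition
`c_i(σ) = M_i [λ_i(0)·(1/2) + Σ_{k=1}^∞ λ_i(k) p_i^{[k]}(-σ(i)|σ)]`. -/
theorem rate_decomposition {d : ℕ} (J : Finset (Fin d → ℤ) → ℝ) (β : ℝ)
    (hβ : 0 < β)
    (hJ : ∀ B : Finset (Fin d → ℤ), B.card ≤ 1 → J B = 0)
    (hsum : ∀ i : Fin d → ℤ,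
      Summable (fun B : Finset (Fin d → ℤ) => if i ∈ B then |J B| else 0))
    (σ : (Fin d → ℤ) → ℝ) (hσ : ∀ j, σ j = 1 ∨ σ j = -1)
    (i : Fin d → ℤ) :
    rate J β i σ =
      bigM J β i * (lam J β i 0 * (1 / 2) +
        ∑' k : ℕ, lam J β i (k + 1) * updateP J β i σ (k + 1)) := by
  classical
  have hs := hsum i
  have hMpos : 0 < bigM J β i := by
    unfold bigM; positivity
  have hT0 : tailJ J i 0 = totalJ J i := tailJ_zero_eq hJ
  have hE0 : energyIn J i 0 σ = (0 : ℝ) := energyIn_zero_eq hJ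
  have hD0 : rateT J β i 0 σ = Real.exp (-β * totalJ J i) := by
    rw [rateT, hT0, hE0]; simp
  have hlam0 : bigM J β i * (lam J β i 0 * (1 / 2)) = rateT J β i 0 σ := by
    rw [hD0]
    simp only [lam, bigM]
    have h2 : (2:ℝ) * Real.exp (β * totalJ J i) *
        (Real.exp (-2 * β * totalJ J i) * (1/2)) =
        Real.exp (β * totalJ J i) * Real.exp (-2 * β * totalJ J i) := by ring
    rw [h2, ← Real.exp_add]
    congr 1
    ring
  have hterm : ∀ k, lam J β i (k + 1) * updateP J β i σ (k + 1) =
      (1 / bigM J β i) * (rateT J β i (k + 1) σ - rateT J β i k σ) :=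
    term_eq hβ hJ hs hσ
  have hnonneg : ∀ k, 0 ≤ lam J β i (k + 1) * updateP J β i σ (k + 1) := by
    intro k
    rw [hterm k]
    have := rateT_mono hβ hs hσ (σ := σ) k
    have h1 : (0 : ℝ) ≤ 1 / bigM J β i := by positivity
    nlinarith
  have hps : Tendsto
      (fun n => ∑ k ∈ Finset.range n, lam J β i (k + 1) * updateP J β i σ (k + 1))
      atTop (𝓝 ((1 / bigM J β i) * (rate J β i σ - rateT J β i 0 σ))) := by
    have h1 : ∀ n, ∑ k ∈ Finset.range n, lam J β i (k + 1) * updateP J β i σ (k + 1)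
        = (1 / bigM J β i) * (rateT J β i n σ - rateT J β i 0 σ) := by
      intro n
      calc ∑ k ∈ Finset.range n, lam J β i (k + 1) * updateP J β i σ (k + 1)
          = ∑ k ∈ Finset.range n,
            ((1 / bigM J β i) * rateT J β i (k + 1) σ -
              (1 / bigM J β i) * rateT J β i k σ) := by
            refine Finset.sum_congr rfl fun k _ => ?_
            rw [hterm k]; ring
        _ = (1 / bigM J β i) * rateT J β i n σ -
              (1 / bigM J β i) * rateT J β i 0 σ :=
            Finset.sum_range_sub (fun k => (1 / bigM J β i) * rateT J β i k σ) n
        _ = (1 / bigM J β i) * (rateT J β i n σ - rateT J β i 0 σ) := by ring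
    refine Tendsto.congr (fun n => (h1 n).symm) ?_
    exact (((tendsto_rateT hs hσ).sub_const (rateT J β i 0 σ)).const_mul _)
  have hHasSum : HasSum (fun k => lam J β i (k + 1) * updateP J β i σ (k + 1))
      ((1 / bigM J β i) * (rate J β i σ - rateT J β i 0 σ)) :=
    (hasSum_iff_tendsto_nat_of_nonneg hnonneg _).2 hps
  rw [hHasSum.tsum_eq, mul_add, hlam0, ← mul_assoc, mul_one_div,
    div_self hMpos.ne', one_mul]
  ring
end
end

section
/- For every ℓ ≥ 1 and every configuration σ, the truncated flip rate satisfies c_i^{[ℓ]}(σ) = M_i [λ_i(0)·(1/2) + Σ_{k=1}^ℓ λ_i(k) p_i^{[k]}(-σ(i)|σ)], i.e., the difference c_i^{[k]}(σ) - c_i^{[k-1]}(σ) equals M_i λ_i(k) p_i^{[k]}(-σ(i)|σ) for each k ≥ 1 (with c_i^{[0]}(σ) := (1/2) M_i λ_i(0)), and each such difference is nonnegative. -/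
open Real

noncomputable section

namespace RateTDecompAux

lemma mem_ball_iff {d : ℕ} (i j : Fin d → ℤ) (k : ℕ) :
    j ∈ ball i k ↔ (∑ t, |j t - i t|) ≤ (k : ℤ) := by
  unfold ball
  rw [Finset.mem_filter, Finset.mem_Icc, Pi.le_def, Pi.le_def]
  constructor
  · exact fun h => h.2
  · intro h
    refine ⟨⟨fun t => ?_, fun t => ?_⟩, h⟩ <;>
    · have ht : |j t - i t| ≤ (k : ℤ) :=
        le_trans (Finset.single_le_sum (f := fun s => |j s - i s|)
          (fun s _ => abs_nonneg _) (Finset.mem_univ t)) h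
      have h2 := abs_le.mp ht
      omega

lemma ball_mono {d : ℕ} (i : Fin d → ℤ) {k l : ℕ} (hkl : k ≤ l) :
    ball i k ⊆ ball i l := by
  intro j hj
  rw [mem_ball_iff] at *
  exact hj.trans (by exact_mod_cast hkl)

lemma ball_zero {d : ℕ} (i : Fin d → ℤ) : ball i 0 = {i} := by
  ext j
  rw [mem_ball_iff, Finset.mem_singleton]
  constructor
  · intro h
    have h0 : ∑ t, |j t - i t| = 0 :=
      le_antisymm (by exact_mod_cast h) (Finset.sum_nonneg fun _ _ => abs_nonneg _)
    funext t
    have ht := (Finset.sum_eq_zero_iff_of_nonneg (fun s _ => abs_nonneg _)).mp h0 t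
      (Finset.mem_univ t)
    have := abs_eq_zero.mp ht
    omega
  · rintro rfl
    simp

lemma summable_ite_of {α : Type*} {f : α → ℝ} (hf : Summable f) (hf0 : ∀ a, 0 ≤ f a)
    (P : α → Prop) [DecidablePred P] (g : α → ℝ)
    (hg : ∀ a, P a → |g a| ≤ f a) :
    Summable (fun a => if P a then g a else 0) := by
  refine Summable.of_norm_bounded hf fun a => ?_
  by_cases h : P a
  · rw [if_pos h, Real.norm_eq_abs]; exact hg a h
  · rw [if_neg h, norm_zero]; exact hf0 a

lemma tsum_ite_split {α : Type*} (P Q R : α → Prop)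
    [DecidablePred P] [DecidablePred Q] [DecidablePred R] (g : α → ℝ)
    (hPQ : ∀ a, Q a → P a) (hPR : ∀ a, R a → P a)
    (hiff : ∀ a, P a → (Q a ↔ ¬ R a))
    (hsQ : Summable fun a => if Q a then g a else 0)
    (hsR : Summable fun a => if R a then g a else 0) :
    ∑' a, (if P a then g a else 0) =
      (∑' a, if Q a then g a else 0) + ∑' a, (if R a then g a else 0) := by
  rw [← Summable.tsum_add hsQ hsR]
  refine tsum_congr fun a => ?_
  by_cases hP : P a
  · by_cases hR : R a
    · rw [if_pos hP, if_neg (fun hQ => (hiff a hP).mp hQ hR), if_pos hR, zero_add]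
    · rw [if_pos hP, if_pos ((hiff a hP).mpr hR), if_neg hR, add_zero]
  · rw [if_neg hP, if_neg (fun h => hP (hPQ a h)), if_neg (fun h => hP (hPR a h)), add_zero]

lemma algebra1 (M x y z : ℝ) (hM : M ≠ 0)
    (hcase : 1 - y * y * x = 0 → x = 1 ∧ y = 1 ∧ z = 1) :
    x * z - x * y = M * (x - x * (x * (y * y))) * ((1 / M) * ((z - y) / (1 - y * y * x))) := by
  by_cases hD : 1 - y * y * x = 0
  · obtain ⟨hx, hy, hz⟩ := hcase hD
    rw [hx, hy, hz]
    norm_num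
  · rw [one_div, div_eq_mul_inv]
    linear_combination (-x * (z - y)) * mul_inv_cancel₀ hM +
      (-x * (z - y) * M * M⁻¹) * mul_inv_cancel₀ hD

lemma algebra2 (M x u w s : ℝ) (hM : M ≠ 0)
    (hcase : 1 - s = 0 → w = 1 ∧ s = 1) :
    x * (u * w) - x * s * u = M * (x - x * s) * ((1 / M) * u * ((w - s) / (1 - s))) := by
  by_cases hD : 1 - s = 0
  · obtain ⟨hw, hs⟩ := hcase hD
    rw [hw, hs]
    ring
  · field_simp

end RateTDecompAux

set_option maxHeartbeats 2000000 in
/-- for every `ℓ ≥ 1` the truncated flip rate satisfies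
`c_i^{[ℓ]}(σ) = M_i [λ_i(0)/2 + Σ_{k=1}^ℓ λ_i(k) p_i^{[k]}(-σ(i)|σ)]`; moreover
`c_i^{[k]}(σ) - c_i^{[k-1]}(σ) = M_i λ_i(k) p_i^{[k]}(-σ(i)|σ) ≥ 0` for every
`k ≥ 1`, where `c_i^{[0]}(σ) = (1/2) M_i λ_i(0)`. -/
theorem rateT_decomposition {d : ℕ} (J : Finset (Fin d → ℤ) → ℝ) (β : ℝ)
    (hβ : 0 < β)
    (hJ : ∀ B : Finset (Fin d → ℤ), B.card ≤ 1 → J B = 0)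
    (hsum : ∀ i : Fin d → ℤ,
      Summable (fun B : Finset (Fin d → ℤ) => if i ∈ B then |J B| else 0))
    (σ : (Fin d → ℤ) → ℝ) (hσ : ∀ j, σ j = 1 ∨ σ j = -1)
    (i : Fin d → ℤ) :
    rateT J β i 0 σ = (1 / 2) * bigM J β i * lam J β i 0 ∧
    (∀ ℓ : ℕ, 1 ≤ ℓ →
      rateT J β i ℓ σ =
        bigM J β i * (lam J β i 0 * (1 / 2) +
          ∑ k ∈ Finset.Icc 1 ℓ, lam J β i k * updateP J β i σ k)) ∧
    (∀ k : ℕ, 1 ≤ k →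
      rateT J β i k σ - rateT J β i (k - 1) σ =
        bigM J β i * lam J β i k * updateP J β i σ k ∧
      0 ≤ rateT J β i k σ - rateT J β i (k - 1) σ) := by
  open RateTDecompAux in
  have hS : Summable (fun B : Finset (Fin d → ℤ) => if i ∈ B then |J B| else 0) := hsum i
  have hS0 : ∀ B : Finset (Fin d → ℤ), 0 ≤ (if i ∈ B then |J B| else 0) := by
    intro B; split
    · exact abs_nonneg _
    · exact le_rfl
  have hchi : ∀ B : Finset (Fin d → ℤ), |J B * chi B σ| = |J B| := by
    intro B
    have h1 : |chi B σ| = 1 := by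
      rw [chi, Finset.abs_prod]
      exact Finset.prod_eq_one fun j _ => by rcases hσ j with h | h <;> simp [h]
    rw [abs_mul, h1, mul_one]
  -- summability of the various restricted sums
  have hsA : ∀ k, Summable (fun B : Finset (Fin d → ℤ) =>
      if i ∈ B ∧ B ⊆ ball i k then |J B| else 0) := fun k =>
    RateTDecompAux.summable_ite_of hS hS0 _ _
      (fun B hB => by rw [if_pos hB.1]; exact (abs_abs _).le)
  have hsTail : ∀ k, Summable (fun B : Finset (Fin d → ℤ) =>
      if i ∈ B ∧ ¬ B ⊆ ball i k then |J B| else 0) := fun k =>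
    RateTDecompAux.summable_ite_of hS hS0 _ _
      (fun B hB => by rw [if_pos hB.1]; exact (abs_abs _).le)
  have hsE : ∀ k, Summable (fun B : Finset (Fin d → ℤ) =>
      if i ∈ B ∧ B ⊆ ball i k then J B * chi B σ else 0) := fun k =>
    RateTDecompAux.summable_ite_of hS hS0 _ _
      (fun B hB => by rw [if_pos hB.1]; exact (hchi B).le)
  have hsShA : ∀ k, Summable (fun B : Finset (Fin d → ℤ) =>
      if i ∈ B ∧ B ⊆ ball i k ∧ ¬ B ⊆ ball i (k - 1) then |J B| else 0) := fun k =>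
    RateTDecompAux.summable_ite_of hS hS0 _ _
      (fun B hB => by rw [if_pos hB.1]; exact (abs_abs _).le)
  have hsShE : ∀ k, Summable (fun B : Finset (Fin d → ℤ) =>
      if i ∈ B ∧ B ⊆ ball i k ∧ ¬ B ⊆ ball i (k - 1) then J B * chi B σ else 0) := fun k =>
    RateTDecompAux.summable_ite_of hS hS0 _ _
      (fun B hB => by rw [if_pos hB.1]; exact (hchi B).le)
  -- nonnegativity of the abs sums
  have htl_nonneg : ∀ k, 0 ≤ tailJ J i k := by
    intro k
    unfold tailJ
    refine tsum_nonneg fun B => ?_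
    split
    · exact abs_nonneg _
    · exact le_rfl
  have hA_nonneg : ∀ k, 0 ≤ innerAbs J i k := by
    intro k
    unfold innerAbs
    refine tsum_nonneg fun B => ?_
    split
    · exact abs_nonneg _
    · exact le_rfl
  have hshA_nonneg : ∀ k, 0 ≤ shellAbs J i k := by
    intro k
    unfold shellAbs
    refine tsum_nonneg fun B => ?_
    split
    · exact abs_nonneg _
    · exact le_rfl
  -- |energyIn| ≤ innerAbs and |shellE| ≤ shellAbs
  have hE_abs : ∀ k, |energyIn J i k σ| ≤ innerAbs J i k := by
    intro k
    unfold energyIn innerAbs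
    have h1 : Summable (fun B : Finset (Fin d → ℤ) =>
        ‖if i ∈ B ∧ B ⊆ ball i k then J B * chi B σ else 0‖) := by
      refine (hsA k).congr fun B => ?_
      by_cases h : i ∈ B ∧ B ⊆ ball i k
      · rw [if_pos h, if_pos h, Real.norm_eq_abs, hchi]
      · rw [if_neg h, if_neg h, norm_zero]
    have h2 := norm_tsum_le_tsum_norm h1
    rw [Real.norm_eq_abs] at h2
    refine h2.trans (le_of_eq (tsum_congr fun B => ?_))
    by_cases h : i ∈ B ∧ B ⊆ ball i k
    · rw [if_pos h, if_pos h, Real.norm_eq_abs, hchi]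
    · rw [if_neg h, if_neg h, norm_zero]
  have hshE_abs : ∀ k, |shellE J i k σ| ≤ shellAbs J i k := by
    intro k
    unfold shellE shellAbs
    have h1 : Summable (fun B : Finset (Fin d → ℤ) =>
        ‖if i ∈ B ∧ B ⊆ ball i k ∧ ¬ B ⊆ ball i (k - 1) then J B * chi B σ else 0‖) := by
      refine (hsShA k).congr fun B => ?_
      by_cases h : i ∈ B ∧ B ⊆ ball i k ∧ ¬ B ⊆ ball i (k - 1)
      · rw [if_pos h, if_pos h, Real.norm_eq_abs, hchi]
      · rw [if_neg h, if_neg h, norm_zero]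
    have h2 := norm_tsum_le_tsum_norm h1
    rw [Real.norm_eq_abs] at h2
    refine h2.trans (le_of_eq (tsum_congr fun B => ?_))
    by_cases h : i ∈ B ∧ B ⊆ ball i k ∧ ¬ B ⊆ ball i (k - 1)
    · rw [if_pos h, if_pos h, Real.norm_eq_abs, hchi]
    · rw [if_neg h, if_neg h, norm_zero]
  -- splitting identities
  have hsplitT : ∀ k, totalJ J i = tailJ J i k + innerAbs J i k := by
    intro k
    unfold totalJ tailJ innerAbs
    exact RateTDecompAux.tsum_ite_split (fun B => i ∈ B)
      (fun B => i ∈ B ∧ ¬ B ⊆ ball i k) (fun B => i ∈ B ∧ B ⊆ ball i k)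
      (fun B => |J B|) (fun B h => h.1) (fun B h => h.1)
      (fun B hB => by tauto) (hsTail k) (hsA k)
  have hsplitTail : ∀ k, tailJ J i k = tailJ J i (k + 1) + shellAbs J i (k + 1) := by
    intro k
    unfold tailJ shellAbs
    simp only [Nat.add_sub_cancel]
    have hss := hsShA (k + 1)
    simp only [Nat.add_sub_cancel] at hss
    exact RateTDecompAux.tsum_ite_split (fun B => i ∈ B ∧ ¬ B ⊆ ball i k)
      (fun B => i ∈ B ∧ ¬ B ⊆ ball i (k + 1))
      (fun B => i ∈ B ∧ B ⊆ ball i (k + 1) ∧ ¬ B ⊆ ball i k)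
      (fun B => |J B|)
      (fun B h => ⟨h.1, fun hs => h.2 (hs.trans (RateTDecompAux.ball_mono i (Nat.le_succ k)))⟩)
      (fun B h => ⟨h.1, h.2.2⟩)
      (fun B hB => by tauto) (hsTail (k + 1)) hss
  have hsplitE : ∀ k, energyIn J i (k + 1) σ = energyIn J i k σ + shellE J i (k + 1) σ := by
    intro k
    unfold energyIn shellE
    simp only [Nat.add_sub_cancel]
    have hss := hsShE (k + 1)
    simp only [Nat.add_sub_cancel] at hss
    exact RateTDecompAux.tsum_ite_split (fun B => i ∈ B ∧ B ⊆ ball i (k + 1))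
      (fun B => i ∈ B ∧ B ⊆ ball i k)
      (fun B => i ∈ B ∧ B ⊆ ball i (k + 1) ∧ ¬ B ⊆ ball i k)
      (fun B => J B * chi B σ)
      (fun B h => ⟨h.1, h.2.trans (RateTDecompAux.ball_mono i (Nat.le_succ k))⟩)
      (fun B h => ⟨h.1, h.2.1⟩)
      (fun B hB => by tauto) (hsE k) hss
  -- level 0 identifications
  have hB0 : ∀ B : Finset (Fin d → ℤ), i ∈ B → B ⊆ ball i 0 → J B = 0 := by
    intro B hi hsub
    apply hJ
    calc B.card ≤ ({i} : Finset (Fin d → ℤ)).card :=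
          Finset.card_le_card (by rwa [← RateTDecompAux.ball_zero i])
      _ = 1 := Finset.card_singleton i
  have hT0 : tailJ J i 0 = totalJ J i := by
    unfold tailJ totalJ
    refine tsum_congr fun B => ?_
    by_cases hi : i ∈ B
    · by_cases hsub : B ⊆ ball i 0
      · rw [if_neg (fun h => h.2 hsub), if_pos hi, hB0 B hi hsub, abs_zero]
      · rw [if_pos ⟨hi, hsub⟩, if_pos hi]
    · rw [if_neg (fun h => hi h.1), if_neg hi]
  have hE0 : energyIn J i 0 σ = 0 := by
    unfold energyIn
    have h1 : (fun B : Finset (Fin d → ℤ) =>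
        if i ∈ B ∧ B ⊆ ball i 0 then J B * chi B σ else 0) = fun _ => 0 := by
      funext B
      by_cases h : i ∈ B ∧ B ⊆ ball i 0
      · rw [if_pos h, hB0 B h.1 h.2, zero_mul]
      · rw [if_neg h]
    rw [h1, tsum_zero]
  have hrate0 : rateT J β i 0 σ = exp (-β * totalJ J i) := by
    unfold rateT
    rw [hT0, hE0, mul_zero, exp_zero, mul_one]
  have hbigM_ne : bigM J β i ≠ 0 := by
    unfold bigM
    positivity
  have hbase : rateT J β i 0 σ = (1 / 2) * bigM J β i * lam J β i 0 := by
    rw [hrate0]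
    show _ = 1 / 2 * (2 * exp (β * totalJ J i)) * exp (-2 * β * totalJ J i)
    rw [show (1 : ℝ) / 2 * (2 * exp (β * totalJ J i)) * exp (-2 * β * totalJ J i)
        = exp (β * totalJ J i) * exp (-2 * β * totalJ J i) by ring, ← exp_add]
    congr 1
    ring
  -- the telescoping differences
  have hdiff : ∀ k : ℕ, 1 ≤ k →
      rateT J β i k σ - rateT J β i (k - 1) σ =
        bigM J β i * lam J β i k * updateP J β i σ k ∧
      0 ≤ rateT J β i k σ - rateT J β i (k - 1) σ := by
    intro k hk
    match k, hk with
    | 1, _ =>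
      have hsp : totalJ J i = tailJ J i 1 + innerAbs J i 1 := hsplitT 1
      have hr1 : rateT J β i 1 σ =
          exp (-β * tailJ J i 1) * exp (-β * energyIn J i 1 σ) := rfl
      have hr0' : rateT J β i (1 - 1) σ =
          exp (-β * tailJ J i 1) * exp (-β * innerAbs J i 1) := by
        show rateT J β i 0 σ = _
        rw [hrate0, ← exp_add, hsp]
        congr 1
        ring
      have hlam1 : lam J β i 1 = exp (-β * tailJ J i 1) -
          exp (-β * tailJ J i 1) * (exp (-β * tailJ J i 1) *
            (exp (-β * innerAbs J i 1) * exp (-β * innerAbs J i 1))) := by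
        show exp (-β * tailJ J i 1) - exp (-2 * β * totalJ J i) = _
        rw [hsp, show -2 * β * (tailJ J i 1 + innerAbs J i 1) =
            -β * tailJ J i 1 + (-β * tailJ J i 1 +
              (-β * innerAbs J i 1 + -β * innerAbs J i 1)) by ring,
          exp_add, exp_add, exp_add]
      have hup1 : updateP J β i σ 1 = (1 / bigM J β i) *
          ((exp (-β * energyIn J i 1 σ) - exp (-β * innerAbs J i 1)) /
            (1 - exp (-β * innerAbs J i 1) * exp (-β * innerAbs J i 1) *
              exp (-β * tailJ J i 1))) := by
        show (1 / bigM J β i) *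
          ((exp (-β * energyIn J i 1 σ) - exp (-β * innerAbs J i 1)) /
            (1 - exp (-2 * β * innerAbs J i 1) * exp (-β * tailJ J i 1))) = _
        rw [show -2 * β * innerAbs J i 1 =
            -β * innerAbs J i 1 + -β * innerAbs J i 1 by ring, exp_add]
      have hcase1 : 1 - exp (-β * innerAbs J i 1) * exp (-β * innerAbs J i 1) *
            exp (-β * tailJ J i 1) = 0 →
          exp (-β * tailJ J i 1) = 1 ∧ exp (-β * innerAbs J i 1) = 1 ∧
            exp (-β * energyIn J i 1 σ) = 1 := by
        intro hD
        have h1 : exp (-β * innerAbs J i 1 + (-β * innerAbs J i 1 + -β * tailJ J i 1)) = 1 := by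
          rw [exp_add, exp_add]
          linarith
        rw [← Real.exp_zero] at h1
        have h0 := Real.exp_eq_exp.mp h1
        have hprod1 : 0 ≤ β * innerAbs J i 1 := mul_nonneg hβ.le (hA_nonneg 1)
        have hprod2 : 0 ≤ β * tailJ J i 1 := mul_nonneg hβ.le (htl_nonneg 1)
        have hba : β * innerAbs J i 1 = 0 := by nlinarith
        have hbt : β * tailJ J i 1 = 0 := by nlinarith
        have hA0 : innerAbs J i 1 = 0 := by
          rcases mul_eq_zero.mp hba with h | h
          · exact absurd h hβ.ne'
          · exact h
        have ht0 : tailJ J i 1 = 0 := by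
          rcases mul_eq_zero.mp hbt with h | h
          · exact absurd h hβ.ne'
          · exact h
        have hEe : energyIn J i 1 σ = 0 := by
          have h3 : |energyIn J i 1 σ| ≤ 0 := by
            have := hE_abs 1
            rw [hA0] at this
            exact this
          exact abs_eq_zero.mp (le_antisymm h3 (abs_nonneg _))
        rw [hA0, ht0, hEe]
        norm_num
      refine ⟨?_, ?_⟩
      · rw [hr1, hr0', hlam1, hup1]
        exact RateTDecompAux.algebra1 _ _ _ _ hbigM_ne hcase1
      · rw [hr1, hr0']
        have hyz : exp (-β * innerAbs J i 1) ≤ exp (-β * energyIn J i 1 σ) := by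
          apply exp_le_exp.mpr
          have h1 : energyIn J i 1 σ ≤ innerAbs J i 1 :=
            (le_abs_self _).trans (hE_abs 1)
          have h2 := mul_le_mul_of_nonneg_left h1 hβ.le
          linarith
        nlinarith [exp_pos (-β * tailJ J i 1)]
    | (m + 2), _ =>
      have e21 : m + 1 + 1 = m + 2 := rfl
      have hsp : tailJ J i (m + 1) = tailJ J i (m + 2) + shellAbs J i (m + 2) := by
        have h := hsplitTail (m + 1)
        rwa [e21] at h
      have hspE : energyIn J i (m + 2) σ =
          energyIn J i (m + 1) σ + shellE J i (m + 2) σ := by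
        have h := hsplitE (m + 1)
        rwa [e21] at h
      have hr2 : rateT J β i (m + 2) σ = exp (-β * tailJ J i (m + 2)) *
          (exp (-β * energyIn J i (m + 1) σ) * exp (-β * shellE J i (m + 2) σ)) := by
        show exp (-β * tailJ J i (m + 2)) * exp (-β * energyIn J i (m + 2) σ) = _
        rw [hspE, show -β * (energyIn J i (m + 1) σ + shellE J i (m + 2) σ) =
            -β * energyIn J i (m + 1) σ + -β * shellE J i (m + 2) σ by ring, exp_add]
      have hr1' : rateT J β i (m + 2 - 1) σ = exp (-β * tailJ J i (m + 2)) *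
          exp (-β * shellAbs J i (m + 2)) * exp (-β * energyIn J i (m + 1) σ) := by
        show exp (-β * tailJ J i (m + 1)) * exp (-β * energyIn J i (m + 1) σ) = _
        rw [hsp, show -β * (tailJ J i (m + 2) + shellAbs J i (m + 2)) =
            -β * tailJ J i (m + 2) + -β * shellAbs J i (m + 2) by ring, exp_add]
      have hlam2 : lam J β i (m + 2) = exp (-β * tailJ J i (m + 2)) -
          exp (-β * tailJ J i (m + 2)) * exp (-β * shellAbs J i (m + 2)) := by
        show exp (-β * tailJ J i (m + 2)) - exp (-β * tailJ J i (m + 1)) = _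
        rw [hsp, show -β * (tailJ J i (m + 2) + shellAbs J i (m + 2)) =
            -β * tailJ J i (m + 2) + -β * shellAbs J i (m + 2) by ring, exp_add]
      have hup2 : updateP J β i σ (m + 2) = (1 / bigM J β i) *
          exp (-β * energyIn J i (m + 1) σ) *
          ((exp (-β * shellE J i (m + 2) σ) - exp (-β * shellAbs J i (m + 2))) /
            (1 - exp (-β * shellAbs J i (m + 2)))) := rfl
      have hcase2 : 1 - exp (-β * shellAbs J i (m + 2)) = 0 →
          exp (-β * shellE J i (m + 2) σ) = 1 ∧ exp (-β * shellAbs J i (m + 2)) = 1 := by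
        intro hD
        have hs1 : exp (-β * shellAbs J i (m + 2)) = 1 := by linarith
        rw [← Real.exp_zero] at hs1
        have h0 := Real.exp_eq_exp.mp hs1
        have hA0 : shellAbs J i (m + 2) = 0 := by
          have h1 : β * shellAbs J i (m + 2) = 0 := by linarith
          rcases mul_eq_zero.mp h1 with h | h
          · exact absurd h hβ.ne'
          · exact h
        have hEe : shellE J i (m + 2) σ = 0 := by
          have h3 : |shellE J i (m + 2) σ| ≤ 0 := by
            have := hshE_abs (m + 2)
            rw [hA0] at this
            exact this
          exact abs_eq_zero.mp (le_antisymm h3 (abs_nonneg _))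
        rw [hA0, hEe]
        norm_num
      refine ⟨?_, ?_⟩
      · rw [hr2, hr1', hlam2, hup2]
        exact RateTDecompAux.algebra2 _ _ _ _ _ hbigM_ne hcase2
      · rw [hr2, hr1']
        have hws : exp (-β * shellAbs J i (m + 2)) ≤ exp (-β * shellE J i (m + 2) σ) := by
          apply exp_le_exp.mpr
          have h1 : shellE J i (m + 2) σ ≤ shellAbs J i (m + 2) :=
            (le_abs_self _).trans (hshE_abs (m + 2))
          have h2 := mul_le_mul_of_nonneg_left h1 hβ.le
          linarith
        nlinarith [mul_nonneg (mul_pos (exp_pos (-β * tailJ J i (m + 2)))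
          (exp_pos (-β * energyIn J i (m + 1) σ))).le (sub_nonneg.mpr hws)]
  -- the telescoped sum
  have hmain : ∀ ℓ : ℕ, rateT J β i ℓ σ = bigM J β i * (lam J β i 0 * (1 / 2) +
      ∑ k ∈ Finset.Icc 1 ℓ, lam J β i k * updateP J β i σ k) := by
    intro ℓ
    induction ℓ with
    | zero =>
      rw [show Finset.Icc 1 0 = (∅ : Finset ℕ) from Finset.Icc_eq_empty (by omega),
        Finset.sum_empty, hbase]
      ring
    | succ n ih =>
      have hd := (hdiff (n + 1) (by omega)).1
      have hsub : n + 1 - 1 = n := rfl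
      rw [hsub] at hd
      have h2 : rateT J β i (n + 1) σ = rateT J β i n σ +
          bigM J β i * lam J β i (n + 1) * updateP J β i σ (n + 1) := by linarith
      rw [h2, ih, Finset.sum_Icc_succ_top (by omega)]
      ring
  exact ⟨hbase, fun ℓ _ => hmain ℓ, hdiff⟩
end
end
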